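/- Soundness of the RG-BasicEvt rule: assume ⊥ has no program transitions and every program transition changes the program component. If for every (l,g,P) ∈ ev the program-level validity Σ ⊨p P sat [pre ∩ g, rely, guar, post] holds, stable(pre, rely) holds, and Id ⊆ guar, then the basic event is valid: Σ ⊨ Event(ev) sat [pre, rely, guar, post]. -/

import Mathlib

namespace PiCore

/-- Event systems of the PiCore event specification language. -/
inductive EventSys (Lbl Prog St : Type) : Type where
  | basic (ev : Set (Lbl × Set St × Prog))
  | atom (ev : Set (Lbl × Set St × Prog))
  | trig (P : Prog)
  | seq (S1 S2 : EventSys Lbl Prog St)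
  | choice (S1 S2 : EventSys Lbl Prog St)
  | join (S1 S2 : EventSys Lbl Prog St)
  | iter (b : Set St) (S : EventSys Lbl Prog St)

/-- Transition kinds of event systems: anonymous τ, event entry, atomic event entry. -/
inductive TranKind (Lbl : Type) : Type where
  | tau
  | evt (l : Lbl)
  | aevt (l : Lbl)

variable {Lbl Prog St Env : Type} (K : Type)
variable (ptran : Env → Prog × St → Prog × St → Prop) (bot : Prog)

/-- Labelled small-step semantics of event systems. -/
inductive esStep (Γ : Env) :
    EventSys Lbl Prog St × St → TranKind Lbl × K → EventSys Lbl Prog St × St → Prop where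
  | basicEvt {ev : Set (Lbl × Set St × Prog)} {l g P s κ}
      (h1 : (l, g, P) ∈ ev) (h2 : s ∈ g) :
      esStep Γ (.basic ev, s) (.evt l, κ) (.trig P, s)
  | atomEvt {ev : Set (Lbl × Set St × Prog)} {l g P s t κ}
      (h1 : (l, g, P) ∈ ev) (h2 : s ∈ g)
      (h3 : Relation.ReflTransGen (fun c c' => ptran Γ c c') (P, s) (bot, t)) :
      esStep Γ (.atom ev, s) (.aevt l, κ) (.trig bot, t)
  | trigEvt {P Q s t κ} (h : ptran Γ (P, s) (Q, t)) :
      esStep Γ (.trig P, s) (.tau, κ) (.trig Q, t)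
  | seqStep {S1 S1' S2 s t} {δ : TranKind Lbl × K}
      (h : esStep Γ (S1, s) δ (S1', t)) (hne : S1' ≠ .trig bot) :
      esStep Γ (.seq S1 S2, s) δ (.seq S1' S2, t)
  | seqFin {S1 S2 s t} {δ : TranKind Lbl × K}
      (h : esStep Γ (S1, s) δ (.trig bot, t)) :
      esStep Γ (.seq S1 S2, s) δ (S2, t)
  | choice1 {S1 S2 S1' s t} {δ : TranKind Lbl × K}
      (h : esStep Γ (S1, s) δ (S1', t)) :
      esStep Γ (.choice S1 S2, s) δ (S1', t)
  | choice2 {S1 S2 S2' s t} {δ : TranKind Lbl × K}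
      (h : esStep Γ (S2, s) δ (S2', t)) :
      esStep Γ (.choice S1 S2, s) δ (S2', t)
  | join1 {S1 S2 S1' s t} {δ : TranKind Lbl × K}
      (h : esStep Γ (S1, s) δ (S1', t)) :
      esStep Γ (.join S1 S2, s) δ (.join S1' S2, t)
  | join2 {S1 S2 S2' s t} {δ : TranKind Lbl × K}
      (h : esStep Γ (S2, s) δ (S2', t)) :
      esStep Γ (.join S1 S2, s) δ (.join S1 S2', t)
  | joinFin {s κ} :
      esStep Γ (.join (.trig bot) (.trig bot), s) (.tau, κ) (.trig bot, s)
  | iterT {b S s κ} (h : s ∈ b) (hne : S ≠ .trig bot) :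
      esStep Γ (.iter b S, s) (.tau, κ) (.seq S (.iter b S), s)
  | iterF {b S s κ} (h : s ∉ b) :
      esStep Γ (.iter b S, s) (.tau, κ) (.trig bot, s)

/-- Linear computations of event systems. -/
inductive cpts (Γ : Env) : List (EventSys Lbl Prog St × St) → Prop where
  | one {S s} : cpts Γ [(S, s)]
  | env {S s t cs} (h : cpts Γ ((S, t) :: cs)) : cpts Γ ((S, s) :: (S, t) :: cs)
  | act {S1 S2 s t cs} {δ : TranKind Lbl × K}
      (h1 : esStep K ptran bot Γ (S1, s) δ (S2, t))
      (h2 : cpts Γ ((S2, t) :: cs)) : cpts Γ ((S1, s) :: (S2, t) :: cs)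

/-- Sequential lifting of a computation. -/
def liftSeq (Q : EventSys Lbl Prog St) (c : List (EventSys Lbl Prog St × St)) :
    List (EventSys Lbl Prog St × St) :=
  c.map fun p => (.seq p.1 Q, p.2)

/-- Modular computations of event systems. -/
inductive cptsM (Γ : Env) : List (EventSys Lbl Prog St × St) → Prop where
  | one {S s} : cptsM Γ [(S, s)]
  | env {S s t cs} (h : cptsM Γ ((S, t) :: cs)) : cptsM Γ ((S, s) :: (S, t) :: cs)
  | trigEvt {P Q s t cs} (h : ptran Γ (P, s) (Q, t))
      (h2 : cptsM Γ ((.trig Q, t) :: cs)) :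
      cptsM Γ ((.trig P, s) :: (.trig Q, t) :: cs)
  | basicEvt {ev : Set (Lbl × Set St × Prog)} {l g P s cs}
      (h1 : (l, g, P) ∈ ev) (h2 : s ∈ g)
      (h3 : cptsM Γ ((.trig P, s) :: cs)) :
      cptsM Γ ((.basic ev, s) :: (.trig P, s) :: cs)
  | atomEvt {ev : Set (Lbl × Set St × Prog)} {l g P s t cs}
      (h1 : (l, g, P) ∈ ev) (h2 : s ∈ g)
      (h3 : Relation.ReflTransGen (fun c c' => ptran Γ c c') (P, s) (bot, t))
      (h4 : cptsM Γ ((.trig bot, t) :: cs)) :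
      cptsM Γ ((.atom ev, s) :: (.trig bot, t) :: cs)
  | seqStep {S1 S1' S2 s t cs} {δ : TranKind Lbl × K}
      (h : esStep K ptran bot Γ (S1, s) δ (S1', t)) (hne : S1' ≠ .trig bot)
      (h2 : cptsM Γ ((.seq S1' S2, t) :: cs)) :
      cptsM Γ ((.seq S1 S2, s) :: (.seq S1' S2, t) :: cs)
  | seqFin {S1 S2 s t cs} {δ : TranKind Lbl × K}
      (h : esStep K ptran bot Γ (S1, s) δ (.trig bot, t))
      (h2 : cptsM Γ ((S2, t) :: cs)) :
      cptsM Γ ((.seq S1 S2, s) :: (S2, t) :: cs)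
  | chc1 {S1 S2 S1' s t cs} {δ : TranKind Lbl × K}
      (h : esStep K ptran bot Γ (S1, s) δ (S1', t))
      (h2 : cptsM Γ ((S1', t) :: cs)) :
      cptsM Γ ((.choice S1 S2, s) :: (S1', t) :: cs)
  | chc2 {S1 S2 S2' s t cs} {δ : TranKind Lbl × K}
      (h : esStep K ptran bot Γ (S2, s) δ (S2', t))
      (h2 : cptsM Γ ((S2', t) :: cs)) :
      cptsM Γ ((.choice S1 S2, s) :: (S2', t) :: cs)
  | join1 {S1 S2 S1' s t cs} {δ : TranKind Lbl × K}
      (h : esStep K ptran bot Γ (S1, s) δ (S1', t))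
      (h2 : cptsM Γ ((.join S1' S2, t) :: cs)) :
      cptsM Γ ((.join S1 S2, s) :: (.join S1' S2, t) :: cs)
  | join2 {S1 S2 S2' s t cs} {δ : TranKind Lbl × K}
      (h : esStep K ptran bot Γ (S2, s) δ (S2', t))
      (h2 : cptsM Γ ((.join S1 S2', t) :: cs)) :
      cptsM Γ ((.join S1 S2, s) :: (.join S1 S2', t) :: cs)
  | joinFin {s cs} (h : cptsM Γ ((.trig bot, s) :: cs)) :
      cptsM Γ ((.join (.trig bot) (.trig bot), s) :: (.trig bot, s) :: cs)
  | iterF {b S s cs} (h : s ∉ b) (h2 : cptsM Γ ((.trig bot, s) :: cs)) :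
      cptsM Γ ((.iter b S, s) :: (.trig bot, s) :: cs)
  | iterTOne {b S s cs} (h : s ∈ b) (h2 : cptsM Γ ((S, s) :: cs)) :
      cptsM Γ ((.iter b S, s) :: liftSeq (.iter b S) ((S, s) :: cs))
  | iterTMore {b S s t cs cs'} {δ : TranKind Lbl × K}
      (h : s ∈ b) (h2 : cptsM Γ ((S, s) :: cs))
      (h3 : esStep K ptran bot Γ (((S, s) :: cs).getLast (List.cons_ne_nil _ _)) δ
              (.trig bot, t))
      (h4 : cptsM Γ ((.iter b S, t) :: cs')) :
      cptsM Γ ((.iter b S, s) ::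
        (liftSeq (.iter b S) ((S, s) :: cs) ++ (.iter b S, t) :: cs'))


section RG

variable (Γ : Env)

/-- The assumption function: the initial state is in `pre` and every environment
step (consecutive configurations with identical event systems) satisfies `rely`. -/
def Assume (pre : Set St) (rely : Set (St × St)) :
    Set (List (EventSys Lbl Prog St × St)) :=
  {cl | (∀ c ∈ cl.head?, c.2 ∈ pre) ∧
    ∀ i : ℕ, (h : i + 1 < cl.length) →
      (cl.get ⟨i, Nat.lt_of_succ_lt h⟩).1 = (cl.get ⟨i + 1, h⟩).1 →
      ((cl.get ⟨i, Nat.lt_of_succ_lt h⟩).2, (cl.get ⟨i + 1, h⟩).2) ∈ rely}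

/-- The commitment function: every component step (consecutive configurations
related by a labelled event-system transition) satisfies `guar`, and the final
state is in `post` whenever the final event system is the terminated event ⟨⊥⟩. -/
def Commit (guar : Set (St × St)) (post : Set St) :
    Set (List (EventSys Lbl Prog St × St)) :=
  {cl | (∀ i : ℕ, (h : i + 1 < cl.length) →
      (∃ δ : TranKind Lbl × K,
        esStep K ptran bot Γ (cl.get ⟨i, Nat.lt_of_succ_lt h⟩) δ (cl.get ⟨i + 1, h⟩)) →
      ((cl.get ⟨i, Nat.lt_of_succ_lt h⟩).2, (cl.get ⟨i + 1, h⟩).2) ∈ guar) ∧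
    (∀ c ∈ cl.getLast?, c.1 = EventSys.trig bot → c.2 ∈ post)}

/-- Computations of an event system `S` starting from the initial state `s`. -/
def cptsFrom (S : EventSys Lbl Prog St) (s : St) :
    Set (List (EventSys Lbl Prog St × St)) :=
  {cl | cpts K ptran bot Γ cl ∧ cl.head? = some (S, s)}

/-- Validity of a rely-guarantee specification for an event system:
`Σ ⊨ ES sat [pre, rely, guar, post]`. -/
def esValid (S : EventSys Lbl Prog St)
    (pre : Set St) (rely guar : Set (St × St)) (post : Set St) : Prop :=
  ∀ s : St, cptsFrom K ptran bot Γ S s ∩ Assume pre rely ⊆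
    Commit K ptran bot Γ guar post

/-- Program computations. -/
inductive pcpts : List (Prog × St) → Prop where
  | one {P s} : pcpts [(P, s)]
  | env {P s t cs} (h : pcpts ((P, t) :: cs)) : pcpts ((P, s) :: (P, t) :: cs)
  | step {P Q s t cs} (h : ptran Γ (P, s) (Q, t))
      (h2 : pcpts ((Q, t) :: cs)) : pcpts ((P, s) :: (Q, t) :: cs)

/-- The assumption function at the program level. -/
def pAssume (pre : Set St) (rely : Set (St × St)) : Set (List (Prog × St)) :=
  {cl | (∀ c ∈ cl.head?, c.2 ∈ pre) ∧
    ∀ i : ℕ, (h : i + 1 < cl.length) →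
      (cl.get ⟨i, Nat.lt_of_succ_lt h⟩).1 = (cl.get ⟨i + 1, h⟩).1 →
      ((cl.get ⟨i, Nat.lt_of_succ_lt h⟩).2, (cl.get ⟨i + 1, h⟩).2) ∈ rely}

/-- The commitment function at the program level, with termination at ⊥. -/
def pCommit (guar : Set (St × St)) (post : Set St) : Set (List (Prog × St)) :=
  {cl | (∀ i : ℕ, (h : i + 1 < cl.length) →
      ptran Γ (cl.get ⟨i, Nat.lt_of_succ_lt h⟩) (cl.get ⟨i + 1, h⟩) →
      ((cl.get ⟨i, Nat.lt_of_succ_lt h⟩).2, (cl.get ⟨i + 1, h⟩).2) ∈ guar) ∧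
    (∀ c ∈ cl.getLast?, c.1 = bot → c.2 ∈ post)}

/-- Program-level validity: `Σ ⊨p P sat [pre, rely, guar, post]`. -/
def pValid (P : Prog) (pre : Set St) (rely guar : Set (St × St)) (post : Set St) :
    Prop :=
  ∀ s : St,
    {cl : List (Prog × St) | pcpts ptran Γ cl ∧ cl.head? = some (P, s)} ∩
      pAssume pre rely ⊆ pCommit ptran bot Γ guar post

end RG

/-- `stable f g`: the set `f` is stable under the relation `g`. -/
def stable {St : Type} (f : Set St) (g : Set (St × St)) : Prop :=
  ∀ x y : St, x ∈ f → (x, y) ∈ g → y ∈ f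

/-- The identity relation on states. -/
def IdRel (St : Type) : Set (St × St) := {p | p.1 = p.2}

end PiCore

section RGAux

open PiCore List

variable {Lbl Prog St Env : Type} {K : Type}
variable {ptran : Env → Prog × St → Prog × St → Prop} {bot : Prog} {Γ : Env}

/-- Extract the program of a triggered event system (default `bot`). -/
def unTrig (bot : Prog) : EventSys Lbl Prog St → Prog
  | .trig P => P
  | _ => bot

/-- Map a configuration to a program configuration. -/
def fcfg (bot : Prog) (c : EventSys Lbl Prog St × St) : Prog × St := (unTrig bot c.1, c.2)

lemma trigStep_inv {P : Prog} {s : St} {δ : TranKind Lbl × K} {c : EventSys Lbl Prog St × St}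
    (h : esStep K ptran bot Γ (.trig P, s) δ c) :
    ∃ Q t, c = (.trig Q, t) ∧ ptran Γ (P, s) (Q, t) := by
  cases h with
  | trigEvt h => exact ⟨_, _, rfl, h⟩

lemma basicStep_inv {ev : Set (Lbl × Set St × Prog)} {s : St} {δ : TranKind Lbl × K}
    {c : EventSys Lbl Prog St × St}
    (h : esStep K ptran bot Γ (.basic ev, s) δ c) :
    ∃ l g P, (l, g, P) ∈ ev ∧ s ∈ g ∧ c = (.trig P, s) := by
  cases h with
  | basicEvt h1 h2 => exact ⟨_, _, _, h1, h2, rfl⟩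

/-- A triggered computation maps to a program computation. -/
lemma trig_pcpts {cl : List (EventSys Lbl Prog St × St)} (h : cpts K ptran bot Γ cl) :
    ∀ P s, cl.head? = some (.trig P, s) → pcpts ptran Γ (cl.map (fcfg bot)) := by
  induction h with
  | one => intro P s _; exact pcpts.one
  | @env S s t cs _ ih =>
    intro P u hh
    simp only [head?_cons, Option.some_inj, Prod.mk.injEq] at hh
    obtain ⟨hS, _⟩ := hh
    subst hS
    exact pcpts.env (ih P t rfl)
  | @act S1 S2 s t cs δ h1 _ ih =>
    intro P u hh
    simp only [head?_cons, Option.some_inj, Prod.mk.injEq] at hh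
    obtain ⟨hS, hs⟩ := hh
    subst hS; subst hs
    obtain ⟨Q, t', hc', hpt⟩ := trigStep_inv h1
    injection hc' with e1 e2
    subst e1; subst e2
    exact pcpts.step hpt (ih Q t rfl)

/-- Transfer of the environment-step chain to the program level. -/
lemma trig_env_chain {rely : Set (St × St)}
    (hneq : ∀ (P : Prog) (s t : St), ¬ ptran Γ (P, s) (P, t))
    {cl : List (EventSys Lbl Prog St × St)} (h : cpts K ptran bot Γ cl) :
    ∀ P s, cl.head? = some (.trig P, s) →
    IsChain (fun c c' : EventSys Lbl Prog St × St => c.1 = c'.1 → (c.2, c'.2) ∈ rely) cl →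
    IsChain (fun a b : Prog × St => a.1 = b.1 → (a.2, b.2) ∈ rely) (cl.map (fcfg bot)) := by
  induction h with
  | one => intro P s _ _; simp
  | @env S s t cs _ ih =>
    intro P u hh hch
    simp only [head?_cons, Option.some_inj, Prod.mk.injEq] at hh
    obtain ⟨hS, _⟩ := hh
    subst hS
    rw [isChain_cons_cons] at hch
    rw [map_cons, map_cons, isChain_cons_cons]
    exact ⟨fun _ => hch.1 rfl, ih P t rfl hch.2⟩
  | @act S1 S2 s t cs δ h1 _ ih =>
    intro P u hh hch
    simp only [head?_cons, Option.some_inj, Prod.mk.injEq] at hh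
    obtain ⟨hS, hs⟩ := hh
    subst hS; subst hs
    obtain ⟨Q, t', hc', hpt⟩ := trigStep_inv h1
    injection hc' with e1 e2
    subst e1; subst e2
    rw [isChain_cons_cons] at hch
    rw [map_cons, map_cons, isChain_cons_cons]
    refine ⟨fun hPQ => ?_, ih Q _ rfl hch.2⟩
    have hPQ' : P = Q := hPQ
    subst hPQ'
    exact absurd hpt (hneq P s t)

/-- Transfer of the guarantee chain back from the program level. -/
lemma trig_guar_chain {guar : Set (St × St)}
    {cl : List (EventSys Lbl Prog St × St)} (h : cpts K ptran bot Γ cl) :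
    ∀ P s, cl.head? = some (.trig P, s) →
    IsChain (fun a b : Prog × St => ptran Γ a b → (a.2, b.2) ∈ guar) (cl.map (fcfg bot)) →
    IsChain (fun c c' : EventSys Lbl Prog St × St =>
      (∃ δ : TranKind Lbl × K, esStep K ptran bot Γ c δ c') → (c.2, c'.2) ∈ guar) cl := by
  induction h with
  | one => intro P s _ _; simp
  | @env S s t cs _ ih =>
    intro P u hh hch
    simp only [head?_cons, Option.some_inj, Prod.mk.injEq] at hh
    obtain ⟨hS, _⟩ := hh
    subst hS
    rw [map_cons, map_cons, isChain_cons_cons] at hch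
    rw [isChain_cons_cons]
    refine ⟨fun hex => ?_, ih P t rfl hch.2⟩
    obtain ⟨δ, hst⟩ := hex
    obtain ⟨Q, t', hc', hpt⟩ := trigStep_inv hst
    injection hc' with e1 e2
    injection e1 with e1
    subst e1; subst e2
    exact hch.1 hpt
  | @act S1 S2 s t cs δ h1 _ ih =>
    intro P u hh hch
    simp only [head?_cons, Option.some_inj, Prod.mk.injEq] at hh
    obtain ⟨hS, hs⟩ := hh
    subst hS; subst hs
    obtain ⟨Q, t', hc', hpt⟩ := trigStep_inv h1
    injection hc' with e1 e2
    subst e1; subst e2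
    rw [map_cons, map_cons, isChain_cons_cons] at hch
    rw [isChain_cons_cons]
    refine ⟨fun hex => ?_, ih Q _ rfl hch.2⟩
    obtain ⟨δ', hst⟩ := hex
    obtain ⟨Q', t'', hc'', hpt'⟩ := trigStep_inv hst
    injection hc'' with e1 e2
    injection e1 with e1
    subst e1; subst e2
    exact hch.1 hpt'

end RGAux

section RGMain

open PiCore List

variable {Lbl Prog St Env : Type} {K : Type}
variable {ptran : Env → Prog × St → Prog × St → Prop} {bot : Prog} {Γ : Env}

lemma mem_Assume_iff {pre : Set St} {rely : Set (St × St)}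
    {cl : List (EventSys Lbl Prog St × St)} :
    cl ∈ Assume (Lbl := Lbl) (Prog := Prog) pre rely ↔
      (∀ c ∈ cl.head?, c.2 ∈ pre) ∧
      IsChain (fun c c' : EventSys Lbl Prog St × St => c.1 = c'.1 → (c.2, c'.2) ∈ rely) cl := by
  rw [Assume, Set.mem_setOf_eq, isChain_iff_getElem]
  constructor
  · rintro ⟨h1, h2⟩
    exact ⟨h1, fun i h => h2 i (by omega)⟩
  · rintro ⟨h1, h2⟩
    exact ⟨h1, fun i h => h2 i (by omega)⟩

lemma mem_Commit_iff {guar : Set (St × St)} {post : Set St}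
    {cl : List (EventSys Lbl Prog St × St)} :
    cl ∈ Commit K ptran bot Γ guar post ↔
      IsChain (fun c c' : EventSys Lbl Prog St × St =>
        (∃ δ : TranKind Lbl × K, esStep K ptran bot Γ c δ c') → (c.2, c'.2) ∈ guar) cl ∧
      (∀ c ∈ cl.getLast?, c.1 = EventSys.trig bot → c.2 ∈ post) := by
  rw [Commit, Set.mem_setOf_eq, isChain_iff_getElem]
  constructor
  · rintro ⟨h1, h2⟩
    exact ⟨fun i h => h1 i (by omega), h2⟩
  · rintro ⟨h1, h2⟩
    exact ⟨fun i h => h1 i (by omega), h2⟩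

lemma mem_pAssume_iff {pre : Set St} {rely : Set (St × St)} {cl : List (Prog × St)} :
    cl ∈ pAssume (Prog := Prog) pre rely ↔
      (∀ c ∈ cl.head?, c.2 ∈ pre) ∧
      IsChain (fun a b : Prog × St => a.1 = b.1 → (a.2, b.2) ∈ rely) cl := by
  rw [pAssume, Set.mem_setOf_eq, isChain_iff_getElem]
  constructor
  · rintro ⟨h1, h2⟩
    exact ⟨h1, fun i h => h2 i (by omega)⟩
  · rintro ⟨h1, h2⟩
    exact ⟨h1, fun i h => h2 i (by omega)⟩

lemma mem_pCommit_iff {guar : Set (St × St)} {post : Set St} {cl : List (Prog × St)} :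
    cl ∈ pCommit ptran bot Γ guar post ↔
      IsChain (fun a b : Prog × St => ptran Γ a b → (a.2, b.2) ∈ guar) cl ∧
      (∀ c ∈ cl.getLast?, c.1 = bot → c.2 ∈ post) := by
  rw [pCommit, Set.mem_setOf_eq, isChain_iff_getElem]
  constructor
  · rintro ⟨h1, h2⟩
    exact ⟨fun i h => h1 i (by omega), h2⟩
  · rintro ⟨h1, h2⟩
    exact ⟨fun i h => h1 i (by omega), h2⟩

/-- The commitment of a triggered-event computation, from program-level validity. -/
lemma trig_commit {pre' : Set St} {rely guar : Set (St × St)} {post : Set St}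
    (hneq : ∀ (P : Prog) (s t : St), ¬ ptran Γ (P, s) (P, t))
    {cl : List (EventSys Lbl Prog St × St)} (h : cpts K ptran bot Γ cl)
    {P : Prog} {s : St} (hh : cl.head? = some (.trig P, s)) (hs : s ∈ pre')
    (hv : pValid ptran bot Γ P pre' rely guar post)
    (hch : IsChain (fun c c' : EventSys Lbl Prog St × St =>
      c.1 = c'.1 → (c.2, c'.2) ∈ rely) cl) :
    IsChain (fun c c' : EventSys Lbl Prog St × St =>
      (∃ δ : TranKind Lbl × K, esStep K ptran bot Γ c δ c') → (c.2, c'.2) ∈ guar) cl ∧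
    (∀ c ∈ cl.getLast?, c.1 = EventSys.trig bot → c.2 ∈ post) := by
  have hpc : pcpts ptran Γ (cl.map (fcfg bot)) := trig_pcpts h P s hh
  have hhead : (cl.map (fcfg bot)).head? = some (P, s) := by
    rw [head?_map, hh]; rfl
  have hpA : cl.map (fcfg bot) ∈ pAssume (Prog := Prog) pre' rely := by
    rw [mem_pAssume_iff]
    refine ⟨?_, trig_env_chain hneq h P s hh hch⟩
    intro c hc
    rw [hhead, Option.mem_def, Option.some_inj] at hc
    exact hc ▸ hs
  have hpC := hv s ⟨⟨hpc, hhead⟩, hpA⟩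
  rw [mem_pCommit_iff] at hpC
  refine ⟨trig_guar_chain h P s hh hpC.1, ?_⟩
  intro c hc hcbot
  have hmem : fcfg bot c ∈ (cl.map (fcfg bot)).getLast? := by
    rw [getLast?_map]
    exact Option.mem_map_of_mem _ hc
  apply hpC.2 _ hmem
  show unTrig bot c.1 = bot
  rw [hcbot]
  rfl

/-- Main induction for the basic-event rule. -/
lemma basic_main {ev : Set (Lbl × Set St × Prog)} {pre : Set St}
    {rely guar : Set (St × St)} {post : Set St}
    (hneq : ∀ (P : Prog) (s t : St), ¬ ptran Γ (P, s) (P, t))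
    (hbody : ∀ l g P, (l, g, P) ∈ ev → pValid ptran bot Γ P (pre ∩ g) rely guar post)
    (hstable : stable pre rely) (hid : IdRel St ⊆ guar)
    {cl : List (EventSys Lbl Prog St × St)} (h : cpts K ptran bot Γ cl) :
    ∀ s, cl.head? = some (.basic ev, s) → s ∈ pre →
    IsChain (fun c c' : EventSys Lbl Prog St × St =>
      c.1 = c'.1 → (c.2, c'.2) ∈ rely) cl →
    IsChain (fun c c' : EventSys Lbl Prog St × St =>
      (∃ δ : TranKind Lbl × K, esStep K ptran bot Γ c δ c') → (c.2, c'.2) ∈ guar) cl ∧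
    (∀ c ∈ cl.getLast?, c.1 = EventSys.trig bot → c.2 ∈ post) := by
  induction h with
  | @one S u =>
    intro s hh _ _
    simp only [head?_cons, Option.some_inj, Prod.mk.injEq] at hh
    obtain ⟨hS, _⟩ := hh
    subst hS
    refine ⟨isChain_singleton _, ?_⟩
    intro c hc hcbot
    rw [getLast?_singleton, Option.mem_def, Option.some_inj] at hc
    exact absurd (hc ▸ hcbot) (by simp)
  | @env S u t cs _ ih =>
    intro s hh hs hch
    simp only [head?_cons, Option.some_inj, Prod.mk.injEq] at hh
    obtain ⟨hS, hu⟩ := hh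
    subst hS; subst hu
    rw [isChain_cons_cons] at hch
    have ht : t ∈ pre := hstable _ t hs (hch.1 rfl)
    obtain ⟨ihc, ihl⟩ := ih t rfl ht hch.2
    refine ⟨isChain_cons_cons.mpr ⟨?_, ihc⟩, ?_⟩
    · intro hex
      obtain ⟨δ, hst⟩ := hex
      obtain ⟨l, g, P, _, _, hP⟩ := basicStep_inv hst
      exact absurd (congrArg Prod.fst hP) (by simp)
    · intro c hc
      rw [getLast?_cons_cons] at hc
      exact ihl c hc
  | @act S1 S2 u t cs δ h1 h2 ih =>
    intro s hh hs hch
    simp only [head?_cons, Option.some_inj, Prod.mk.injEq] at hh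
    obtain ⟨hS, hu⟩ := hh
    subst hS; subst hu
    obtain ⟨l, g, P, hmem, hg, hP⟩ := basicStep_inv h1
    injection hP with e1 e2
    subst e1; subst e2
    rw [isChain_cons_cons] at hch
    obtain ⟨tc, tl⟩ := trig_commit (Lbl := Lbl) (K := K) hneq h2 rfl
      (Set.mem_inter hs hg) (hbody l g P hmem) hch.2
    refine ⟨isChain_cons_cons.mpr ⟨fun _ => hid rfl, tc⟩, ?_⟩
    intro c hc
    rw [getLast?_cons_cons] at hc
    exact tl c hc

end RGMain


open PiCore in
/-- **Soundness of the RG-BasicEvt rule.** -/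
theorem rg_basicEvt_sound
    {Lbl Prog St Env : Type} (K : Type)
    (ptran : Env → Prog × St → Prog × St → Prop) (bot : Prog)
    (hbot : ∀ (Γ : Env) (s : St) (c : Prog × St), ¬ ptran Γ (bot, s) c)
    (hneq : ∀ (Γ : Env) (P : Prog) (s t : St), ¬ ptran Γ (P, s) (P, t))
    (Γ : Env) (ev : Set (Lbl × Set St × Prog))
    (pre : Set St) (rely guar : Set (St × St)) (post : Set St)
    (hbody : ∀ l g P, (l, g, P) ∈ ev → pValid ptran bot Γ P (pre ∩ g) rely guar post)
    (hstable : stable pre rely)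
    (hid : IdRel St ⊆ guar) :
    esValid K ptran bot Γ (EventSys.basic ev) pre rely guar post := by
  intro s cl hcl
  obtain ⟨⟨hcpt, hhead⟩, hA⟩ := hcl
  rw [mem_Assume_iff] at hA
  have hs : s ∈ pre := hA.1 (EventSys.basic ev, s) (by rw [hhead]; rfl)
  obtain ⟨hc, hl⟩ := basic_main (hneq Γ) (hbody) hstable hid hcpt s hhead hs hA.2
  rw [mem_Commit_iff]
  exact ⟨hc, hl⟩
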